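/- Let G be a finite 2-qBMG and let x, y be vertices lying in the same Aut_I(G)-orbit, i.e., y = h(x) for some color-preserving automorphism h of G. If x and y have a common out-neighbor, then x ∼̇ y. -/

import Mathlib

/-- Two vertices are equivalent (`x ∼̇ y`) if they have the same
out-neighbors and the same in-neighbors. -/
def dotSim {V : Type*} (E : V → V → Prop) (x y : V) : Prop :=
  (∀ z, E x z ↔ E y z) ∧ (∀ z, E z x ↔ E z y)

/-- `U` and `W` are the color classes of a 2-colored digraph with edge relation `E`:
they partition the vertex set and every edge has one endpoint in each class. -/
def IsTwoColored {V : Type*} (E : V → V → Prop) (U W : Set V) : Prop :=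
  (∀ v, v ∈ U ∨ v ∈ W) ∧ (∀ v, ¬(v ∈ U ∧ v ∈ W)) ∧
    ∀ u v, E u v → (u ∈ U ∧ v ∈ W) ∨ (u ∈ W ∧ v ∈ U)

/-- Axiom (N1). -/
def AxN1 {V : Type*} (E : V → V → Prop) : Prop :=
  ∀ u v, u ≠ v → ¬E u v → ¬E v u → ∀ w t, ¬(E u t ∧ E v w ∧ E t w)

/-- Axiom (N2): bi-transitivity. -/
def AxN2 {V : Type*} (E : V → V → Prop) : Prop :=
  ∀ u v w t, E u v → E v w → E w t → E u t

/-- Axiom (N3). -/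
def AxN3 {V : Type*} (E : V → V → Prop) : Prop :=
  ∀ u v w, E u w → E v w → (∀ z, E u z → E v z) ∨ (∀ z, E v z → E u z)

/-- A 2-qBMG: an irreflexive 2-colored digraph satisfying (N1), (N2), (N3). -/
def IsQBMG {V : Type*} (E : V → V → Prop) (U W : Set V) : Prop :=
  (∀ v, ¬E v v) ∧ IsTwoColored E U W ∧ AxN1 E ∧ AxN2 E ∧ AxN3 E

/-- An automorphism of the digraph: a permutation mapping edges to edges. -/
def IsAut {V : Type*} (E : V → V → Prop) (π : Equiv.Perm V) : Prop :=
  ∀ u v, E u v → E (π u) (π v)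

/-- A color-preserving automorphism of the 2-colored digraph. -/
def IsAutI {V : Type*} (E : V → V → Prop) (U W : Set V) (π : Equiv.Perm V) : Prop :=
  IsAut E π ∧ (∀ v ∈ U, π v ∈ U) ∧ (∀ v ∈ W, π v ∈ W)


lemma aut_inv {V : Type*} [Fintype V] (E : V → V → Prop) (h : Equiv.Perm V)
    (ha : IsAut E h) : IsAut E h⁻¹ := by
  classical
  intro u v huv
  set f : V × V ≃ V × V := h.prodCongr h with hf
  set S : Finset (V × V) := Finset.univ.filter (fun p => E p.1 p.2) with hS
  have hsub : S.image f ⊆ S := by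
    intro p hp
    simp only [Finset.mem_image] at hp
    obtain ⟨q, hq, rfl⟩ := hp
    simp only [hS, Finset.mem_filter, Finset.mem_univ, true_and] at hq ⊢
    exact ha _ _ hq
  have hcard : (S.image f).card = S.card := Finset.card_image_of_injective _ f.injective
  have heq : S.image f = S := Finset.eq_of_subset_of_card_le hsub (le_of_eq hcard.symm)
  have hmem : (u, v) ∈ S := by simp [hS, huv]
  rw [← heq] at hmem
  simp only [Finset.mem_image] at hmem
  obtain ⟨q, hq, hfq⟩ := hmem
  simp only [hS, Finset.mem_filter, Finset.mem_univ, true_and] at hq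
  have hq1 : h q.1 = u := congrArg Prod.fst hfq
  have hq2 : h q.2 = v := congrArg Prod.snd hfq
  have e1 : h⁻¹ u = q.1 := by rw [← hq1]; simp
  have e2 : h⁻¹ v = q.2 := by rw [← hq2]; simp
  rw [e1, e2]; exact hq

lemma key_lemma {V : Type*} (E : V → V → Prop) (irr : ∀ v, ¬E v v)
    (n1 : AxN1 E) (n2 : AxN2 E) (h : Equiv.Perm V) (ha : IsAut E h)
    (x y w : V) (hxy : h x = y) (hout : ∀ t, E x t ↔ E y t)
    (hxw : E x w) (z : V) (hzx : E z x) : E z y := by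
  by_contra hnzy
  have hzy : z ≠ y := by rintro rfl; exact irr x ((hout x).2 hzx)
  by_cases hyz : E y z
  · have hxz : E x z := (hout z).2 hyz
    have h1 : E y (h z) := by rw [← hxy]; exact ha _ _ hxz
    have h2 : E x (h z) := (hout _).2 h1
    have h3 : E (h z) y := by rw [← hxy]; exact ha _ _ hzx
    exact hnzy (n2 z x (h z) y hzx h2 h3)
  · exact n1 z y hzy hnzy hyz w x ⟨hzx, (hout w).1 hxw, hxw⟩

/-- Let `G` be a finite 2-qBMG and let `x`, `y` be vertices lying in the
same `Aut_I(G)`-orbit, i.e. `y = h x` for a color-preserving automorphism `h`.  If `x`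
and `y` have a common out-neighbor, then `x ∼̇ y`. -/
theorem stmt_8 {V : Type*} [Fintype V] [DecidableEq V] (E : V → V → Prop) (U W : Set V)
    (hG : IsQBMG E U W) (x y : V) (h : Equiv.Perm V) (hh : IsAutI E U W h)
    (hxy : y = h x) (w : V) (hxw : E x w) (hyw : E y w) :
    dotSim E x y := by
  classical
  obtain ⟨irr, _htc, n1, n2, n3⟩ := hG
  obtain ⟨haut, -, -⟩ := hh
  have hainv : IsAut E h⁻¹ := aut_inv E h haut
  have hyx : h⁻¹ y = x := by rw [hxy]; simp
  set Nx : Finset V := Finset.univ.filter (fun t => E x t) with hNx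
  set Ny : Finset V := Finset.univ.filter (fun t => E y t) with hNy
  have hc1 : Nx.card ≤ Ny.card := by
    apply Finset.card_le_card_of_injOn (fun t => h t)
    · intro t ht
      simp only [hNx, hNy, Finset.mem_coe, Finset.mem_filter, Finset.mem_univ, true_and] at ht ⊢
      rw [hxy]; exact haut _ _ ht
    · exact fun a _ b _ hab => h.injective hab
  have hc2 : Ny.card ≤ Nx.card := by
    apply Finset.card_le_card_of_injOn (fun t => h⁻¹ t)
    · intro t ht
      simp only [hNx, hNy, Finset.mem_coe, Finset.mem_filter, Finset.mem_univ, true_and] at ht ⊢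
      rw [← hyx]; exact hainv _ _ ht
    · exact fun a _ b _ hab => h⁻¹.injective hab
  have hNeq : Nx = Ny := by
    rcases n3 x y w hxw hyw with hs | hs
    · apply Finset.eq_of_subset_of_card_le _ hc2
      intro t ht
      simp only [hNx, hNy, Finset.mem_filter, Finset.mem_univ, true_and] at ht ⊢
      exact hs t ht
    · refine (Finset.eq_of_subset_of_card_le ?_ hc1).symm
      intro t ht
      simp only [hNx, hNy, Finset.mem_filter, Finset.mem_univ, true_and] at ht ⊢
      exact hs t ht
  have hout : ∀ t, E x t ↔ E y t := by
    intro t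
    have := Finset.ext_iff.1 hNeq t
    simpa only [hNx, hNy, Finset.mem_filter, Finset.mem_univ, true_and] using this
  refine ⟨hout, fun z => ⟨fun hzx => key_lemma E irr n1 n2 h haut x y w hxy.symm hout hxw z hzx,
    fun hzy => key_lemma E irr n1 n2 h⁻¹ hainv y x w hyx (fun t => (hout t).symm) hyw z hzy⟩⟩
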